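/- Every graph G satisfies ζ(G) ≤ 4·(arb(G))². -/

import Mathlib

open SimpleGraph

/-- A walk is monochromatic under an edge coloring if all its edges get one color. -/
def Monochromatic {V α : Type*} {G : SimpleGraph V} {u v : V}
    (c : Sym2 V → α) (p : G.Walk u v) : Prop :=
  ∃ a, ∀ e ∈ p.edges, c e = a

/-- An edge coloring is strongly woody if no broken cycle (a path of length ≥ 2 whose
endpoints are adjacent, i.e. a cycle minus one edge) is monochromatic. -/
def StronglyWoody {V α : Type*} (G : SimpleGraph V) (c : Sym2 V → α) : Prop :=
  ∀ ⦃u v : V⦄ (p : G.Walk u v), p.IsPath → 2 ≤ p.length → G.Adj u v →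
    ¬ Monochromatic c p

/-- The strong arboricity: least number of colors in a strongly woody edge coloring. -/
noncomputable def strongArboricity {V : Type*} (G : SimpleGraph V) : ℕ :=
  sInf {k | ∃ c : Sym2 V → Fin k, StronglyWoody G c}

/-- An edge coloring is woody if no cycle is monochromatic (each color class is a forest). -/
def Woody {V α : Type*} (G : SimpleGraph V) (c : Sym2 V → α) : Prop :=
  ∀ ⦃u : V⦄ (p : G.Walk u u), p.IsCycle → ¬ Monochromatic c p

/-- The arboricity: least number of colors in a woody edge coloring. -/
noncomputable def arboricity {V : Type*} (G : SimpleGraph V) : ℕ :=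
  sInf {k | ∃ c : Sym2 V → Fin k, Woody G c}

/-- A proper vertex coloring. -/
def ProperColoring {V α : Type*} (G : SimpleGraph V) (f : V → α) : Prop :=
  ∀ ⦃u v : V⦄, G.Adj u v → f u ≠ f v

/-- An acyclic coloring: proper and no cycle uses at most two colors. -/
def AcyclicColoring {V α : Type*} (G : SimpleGraph V) (f : V → α) : Prop :=
  ProperColoring G f ∧
    ∀ ⦃u : V⦄ (p : G.Walk u u), p.IsCycle →
      ¬ ∃ a b, ∀ x ∈ p.support, f x = a ∨ f x = b

/-- The acyclic chromatic number. -/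
noncomputable def acyclicChromaticNumber {V : Type*} (G : SimpleGraph V) : ℕ :=
  sInf {k | ∃ f : V → Fin k, AcyclicColoring G f}

/-- The chromatic number (least number of colors in a proper vertex coloring). -/
noncomputable def chromNum {V : Type*} (G : SimpleGraph V) : ℕ :=
  sInf {k | ∃ f : V → Fin k, ProperColoring G f}

/-- A proper edge coloring: adjacent edges receive distinct colors. -/
def ProperEdgeColoring {V α : Type*} (G : SimpleGraph V) (c : Sym2 V → α) : Prop :=
  ∀ ⦃u v w : V⦄, G.Adj u v → G.Adj v w → u ≠ w → c s(u, v) ≠ c s(v, w)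

/-- The chromatic index: least number of colors in a proper edge coloring. -/
noncomputable def edgeChromNum {V : Type*} (G : SimpleGraph V) : ℕ :=
  sInf {k | ∃ c : Sym2 V → Fin k, ProperEdgeColoring G c}

/-- The 2-arboricity: least number of colors so that every cycle C receives at least
min{|C|, 3} colors. -/
noncomputable def arboricity2 {V : Type*} (G : SimpleGraph V) : ℕ :=
  sInf {k | ∃ c : Sym2 V → Fin k, ∀ ⦃u : V⦄ (p : G.Walk u u), p.IsCycle →
    min p.length 3 ≤ (p.edges.map c).toFinset.card}

/-- `H` is a minor of `G`: there are disjoint nonempty connected branch sets in `G`,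
one for each vertex of `H`, with an edge of `G` between the branch sets of any two
adjacent vertices of `H`. -/
def IsMinorOf {W V : Type*} (H : SimpleGraph W) (G : SimpleGraph V) : Prop :=
  ∃ φ : W → Set V,
    (∀ w, (φ w).Nonempty) ∧
    (∀ w, (G.induce (φ w)).Connected) ∧
    (Pairwise fun w w' => Disjoint (φ w) (φ w')) ∧
    (∀ ⦃w w'⦄, H.Adj w w' → ∃ a ∈ φ w, ∃ b ∈ φ w', G.Adj a b)

/-- Wagner's characterization: planar = no K₅ minor and no K₃,₃ minor. -/
def Planar {V : Type*} (G : SimpleGraph V) : Prop :=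
  ¬ IsMinorOf (completeGraph (Fin 5)) G ∧
    ¬ IsMinorOf (completeBipartiteGraph (Fin 3) (Fin 3)) G

/-- Outerplanar = no K₄ minor and no K₂,₃ minor. -/
def Outerplanar {V : Type*} (G : SimpleGraph V) : Prop :=
  ¬ IsMinorOf (completeGraph (Fin 4)) G ∧
    ¬ IsMinorOf (completeBipartiteGraph (Fin 2) (Fin 3)) G

namespace Stmt11Aux

variable {V : Type*} [DecidableEq V] {H : SimpleGraph V} {d : V → ℕ} {A : V → Prop} {b : ℕ}




lemma exists_geodesic {r v : V} (hr : H.Reachable r v) :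
    ∃ p : H.Walk r v, p.IsPath ∧ p.length = H.dist r v := by
  obtain ⟨p, hp⟩ := hr.exists_walk_length_eq_dist
  exact ⟨p.bypass, p.bypass_isPath,
    le_antisymm (hp ▸ p.length_bypass_le) (SimpleGraph.dist_le _)⟩

lemma dist_le_of_mem_support {r x u : V} {p : H.Walk r u} (hmem : x ∈ p.support) :
    H.dist r x ≤ p.length :=
  (SimpleGraph.dist_le _).trans (Walk.length_takeUntil_le p hmem)

lemma len_take_add_drop {r x u : V} (p : H.Walk r u) (hmem : x ∈ p.support) :
    (p.takeUntil x hmem).length + (p.dropUntil x hmem).length = p.length := by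
  rw [← Walk.length_append, Walk.take_spec]

/-- In an acyclic graph, adjacent vertices have different distances to any common root. -/
lemma adj_dist_ne (hac : H.IsAcyclic) {r u v : V} (hr : H.Reachable r u) (h : H.Adj u v) :
    H.dist r u ≠ H.dist r v := by
  intro heq
  obtain ⟨p, hp, hpl⟩ := exists_geodesic hr
  obtain ⟨q, hq, hql⟩ := exists_geodesic (hr.trans h.reachable)
  have hvp : v ∉ p.support := by
    intro hmem
    have h1 : H.dist r v ≤ (p.takeUntil v hmem).length := SimpleGraph.dist_le _
    have h2 := len_take_add_drop p hmem
    have h3 : (p.takeUntil v hmem).length ≤ p.length := Walk.length_takeUntil_le p hmem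
    have h4 : (p.dropUntil v hmem).length = 0 := by omega
    exact h.ne' (Walk.eq_of_length_eq_zero (p := p.dropUntil v hmem) h4)
  have hP1 : (Walk.cons h.symm p.reverse).IsPath := by
    rw [Walk.cons_isPath_iff]
    refine ⟨hp.reverse, ?_⟩
    simpa [Walk.support_reverse] using hvp
  have hu := isAcyclic_iff_path_unique.mp hac
    (⟨Walk.cons h.symm p.reverse, hP1⟩ : H.Path v r) ⟨q.reverse, hq.reverse⟩
  have := congrArg (fun w : H.Path v r => w.val.length) hu
  simp only [Walk.length_cons, Walk.length_reverse] at this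
  omega

lemma adj_dist_succ (hac : H.IsAcyclic) {r u v : V} (hr : H.Reachable r u) (h : H.Adj u v) :
    H.dist r u = H.dist r v + 1 ∨ H.dist r v = H.dist r u + 1 := by
  have hne := adj_dist_ne hac hr h
  obtain ⟨p, hp, hpl⟩ := exists_geodesic hr
  obtain ⟨q, hq, hql⟩ := exists_geodesic (hr.trans h.reachable)
  have h1 : H.dist r v ≤ H.dist r u + 1 := by
    have := SimpleGraph.dist_le (p.concat h)
    rwa [Walk.length_concat, hpl] at this
  have h2 : H.dist r u ≤ H.dist r v + 1 := by
    have := SimpleGraph.dist_le (q.concat h.symm)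
    rwa [Walk.length_concat, hql] at this
  omega

/-- In an acyclic graph, "parents" are unique. -/
lemma parent_unique (hac : H.IsAcyclic) {r x y z : V} (hrx : H.Reachable r x)
    (hy : H.Adj y x) (hz : H.Adj z x)
    (hdy : H.dist r y + 1 = H.dist r x) (hdz : H.dist r z + 1 = H.dist r x) : y = z := by
  by_contra hne
  obtain ⟨p, hp, hpl⟩ := exists_geodesic (hrx.trans hy.symm.reachable)
  obtain ⟨q, hq, hql⟩ := exists_geodesic (hrx.trans hz.symm.reachable)
  have hxp : x ∉ p.support := by
    intro hmem
    have := dist_le_of_mem_support hmem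
    omega
  have hxq : x ∉ q.support := by
    intro hmem
    have := dist_le_of_mem_support hmem
    omega
  have hP1 : (Walk.cons hy.symm p.reverse).IsPath := by
    rw [Walk.cons_isPath_iff]
    exact ⟨hp.reverse, by simpa [Walk.support_reverse] using hxp⟩
  have hP2 : (Walk.cons hz.symm q.reverse).IsPath := by
    rw [Walk.cons_isPath_iff]
    exact ⟨hq.reverse, by simpa [Walk.support_reverse] using hxq⟩
  have hu := isAcyclic_iff_path_unique.mp hac
    (⟨Walk.cons hy.symm p.reverse, hP1⟩ : H.Path x r) ⟨Walk.cons hz.symm q.reverse, hP2⟩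
  have hsupp := congrArg (fun w : H.Path x r => w.val.support) hu
  simp only [Walk.support_cons] at hsupp
  rw [p.reverse.support_eq_cons, q.reverse.support_eq_cons] at hsupp
  simp only [List.cons.injEq] at hsupp
  exact hne hsupp.2.1





section Zig

variable (hd1 : ∀ ⦃u v : V⦄, H.Adj u v → d u = d v + 1 ∨ d v = d u + 1)
  (hpar : ∀ ⦃x y z : V⦄, H.Adj y x → H.Adj z x → d y + 1 = d x → d z + 1 = d x → y = z)

include hd1 hpar

/-- After an ascending step into `x`, a monochromatic path must stop. -/
lemma afterUp {x y w : V} (p : H.Walk x y) (hp : p.IsPath)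
    (hM : ∀ ⦃a a' : V⦄, s(a, a') ∈ p.edges → d a' = d a + 1 → A a' ∧ d a' % 2 = b)
    (hx : d x % 2 = b) (hw : H.Adj w x) (hwx : d x = d w + 1) (hws : w ∉ p.support) :
    p.length = 0 := by
  cases p with
  | nil => rfl
  | @cons _ z _ h q =>
    exfalso
    rcases hd1 h with hdz | hdz
    · -- descend: local max at x
      have hzx : w = z := hpar hw h.symm hwx.symm hdz.symm
      exact hws (by rw [Walk.support_cons]; exact List.mem_cons_of_mem _ (hzx ▸ q.start_mem_support))
    · -- ascend again: parity clash
      have hmem : s(x, z) ∈ (Walk.cons h q).edges := by simp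
      have := (hM hmem hdz).2
      omega

/-- After a descending step into `m`, a monochromatic path makes at most one more
(ascending) step, ending in a vertex satisfying `A`. -/
lemma afterDown {m y u : V} (p : H.Walk m y) (hp : p.IsPath)
    (hM : ∀ ⦃a a' : V⦄, s(a, a') ∈ p.edges → d a' = d a + 1 → A a' ∧ d a' % 2 = b)
    (hu : H.Adj u m) (hum : d u = d m + 1) (hus : u ∉ p.support) (hupar : d u % 2 = b) :
    p.length = 0 ∨ (p.length = 1 ∧ A y) := by
  cases p with
  | nil => exact Or.inl rfl
  | @cons _ z _ h q =>
    rcases hd1 h with hdz | hdz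
    · -- descend again: parity clash
      exfalso
      have hmem : s(z, m) ∈ (Walk.cons h q).edges := by rw [Sym2.eq_swap]; simp
      have := (hM hmem hdz).2
      omega
    · -- ascend: m → z, then stop
      have hmem : s(m, z) ∈ (Walk.cons h q).edges := by simp
      obtain ⟨hAz, hzpar⟩ := hM hmem hdz
      obtain ⟨hq, hms⟩ := (Walk.cons_isPath_iff h q).mp hp
      have hq0 : q.length = 0 :=
        afterUp hd1 hpar q hq
          (fun a a' ha hda => hM (by rw [Walk.edges_cons]; exact List.mem_cons_of_mem _ ha) hda)
          hzpar h hdz hms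
      have hzy : z = y := Walk.eq_of_length_eq_zero (p := q) hq0
      right
      constructor
      · simp [Walk.length_cons, hq0]
      · exact hzy ▸ hAz

/-- A monochromatic path of length ≥ 2 has both endpoints satisfying `A`. -/
lemma bothEnds {u v : V} (p : H.Walk u v) (hp : p.IsPath)
    (hM : ∀ ⦃a a' : V⦄, s(a, a') ∈ p.edges → d a' = d a + 1 → A a' ∧ d a' % 2 = b)
    (hlen : 2 ≤ p.length) : A u ∧ A v := by
  cases p with
  | nil => simp at hlen
  | @cons _ m _ h q =>
    obtain ⟨hq, hus⟩ := (Walk.cons_isPath_iff h q).mp hp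
    have hMq : ∀ ⦃a a' : V⦄, s(a, a') ∈ q.edges → d a' = d a + 1 → A a' ∧ d a' % 2 = b :=
      fun a a' ha hda => hM (by rw [Walk.edges_cons]; exact List.mem_cons_of_mem _ ha) hda
    rcases hd1 h with hdm | hdm
    · -- first step descends: d u = d m + 1
      have hmem : s(m, u) ∈ (Walk.cons h q).edges := by rw [Sym2.eq_swap]; simp
      obtain ⟨hAu, hupar⟩ := hM hmem hdm
      rcases afterDown hd1 hpar q hq hMq h hdm hus hupar with h0 | ⟨h1, hAv⟩
      · exfalso; rw [Walk.length_cons, h0] at hlen; omega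
      · exact ⟨hAu, hAv⟩
    · -- first step ascends: must stop, contradiction with length ≥ 2
      exfalso
      have hmem : s(u, m) ∈ (Walk.cons h q).edges := by simp
      obtain ⟨_, hmpar⟩ := hM hmem hdm
      have hq0 : q.length = 0 := afterUp hd1 hpar q hq hMq hmpar h hdm hus
      rw [Walk.length_cons, hq0] at hlen; omega

end Zig




lemma greedy {V : Type*} [Fintype V] [DecidableEq V] (G : SimpleGraph V) [DecidableRel G.Adj] (ℓ : ℕ) (hl : 0 < ℓ)
    (cc : Sym2 V → Fin ℓ) (D : Fin ℓ → V → ℕ)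
    (hstep : ∀ i (u v : V), G.Adj u v → cc s(u, v) = i →
      D i u = D i v + 1 ∨ D i v = D i u + 1)
    (hpar : ∀ i (x y z : V), G.Adj y x → cc s(y, x) = i → G.Adj z x → cc s(z, x) = i →
      D i y + 1 = D i x → D i z + 1 = D i x → y = z) :
    ∃ f : V → Fin (2 * ℓ), ∀ u v : V, G.Adj u v → f u ≠ f v := by
  suffices h : ∀ n (S : Finset V), S.card ≤ n →
      ∃ f : V → Fin (2 * ℓ), ∀ u ∈ S, ∀ v ∈ S, G.Adj u v → f u ≠ f v by
    obtain ⟨f, hf⟩ := h (Finset.univ.card) Finset.univ le_rfl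
    exact ⟨f, fun u v h => hf u (Finset.mem_univ u) v (Finset.mem_univ v) h⟩
  intro n
  induction n with
  | zero =>
    intro S hS
    have hS0 : S = ∅ := Finset.card_eq_zero.mp (Nat.le_zero.mp hS)
    subst hS0
    exact ⟨fun _ => ⟨0, by omega⟩, by simp⟩
  | succ n ih =>
    intro S hS
    rcases eq_or_ne S ∅ with hSe | hSe
    · refine ⟨fun _ => ⟨0, by omega⟩, fun u hu => ?_⟩
      simp [hSe] at hu
    have hSne : S.Nonempty := Finset.nonempty_iff_ne_empty.mpr hSe
    have hS1 : 1 ≤ S.card := Finset.card_pos.mpr hSne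
    -- find a vertex of small degree within S
    have hdeg : ∃ v₀ ∈ S, (S.filter (fun w => G.Adj v₀ w)).card < 2 * ℓ := by
      by_contra hcon
      push_neg at hcon
      set T : Finset (V × V) := (S ×ˢ S).filter (fun p => G.Adj p.1 p.2) with hT
      -- lower bound for T.card
      have hTfst : ∀ p ∈ T, p.1 ∈ S := by
        intro p hp
        rw [hT, Finset.mem_filter, Finset.mem_product] at hp
        exact hp.1.1
      have hlow : T.card = ∑ u ∈ S, (T.filter (fun p => p.1 = u)).card :=
        Finset.card_eq_sum_card_fiberwise hTfst
      have hfib : ∀ u ∈ S, (T.filter (fun p => p.1 = u)).card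
          = (S.filter (fun w => G.Adj u w)).card := by
        intro u hu
        have himg : (T.filter (fun p => p.1 = u))
            = (S.filter (fun w => G.Adj u w)).image (fun w => (u, w)) := by
          ext p
          simp only [Finset.mem_filter, Finset.mem_image, hT, Finset.mem_product]
          constructor
          · rintro ⟨⟨⟨h1, h2⟩, h3⟩, h4⟩
            exact ⟨p.2, ⟨h2, h4 ▸ h3⟩, Prod.ext h4.symm rfl⟩
          · rintro ⟨w, ⟨hwS, hadj⟩, rfl⟩
            exact ⟨⟨⟨hu, hwS⟩, hadj⟩, rfl⟩
        rw [himg, Finset.card_image_of_injective _ (fun a b h => by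
          simpa using h)]
      have hlow2 : 2 * ℓ * S.card ≤ T.card := by
        rw [hlow]
        calc 2 * ℓ * S.card = ∑ _u ∈ S, 2 * ℓ := by
              rw [Finset.sum_const, smul_eq_mul, mul_comm]
          _ ≤ ∑ u ∈ S, (T.filter (fun p => p.1 = u)).card := by
              apply Finset.sum_le_sum
              intro u hu
              rw [hfib u hu]
              exact hcon u hu
      -- upper bound for T.card
      have hup : T.card = ∑ i ∈ (Finset.univ : Finset (Fin ℓ)),
          (T.filter (fun p => cc s(p.1, p.2) = i)).card :=
        Finset.card_eq_sum_card_fiberwise (fun p _ => Finset.mem_univ _)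
      have hupi : ∀ i : Fin ℓ, (T.filter (fun p => cc s(p.1, p.2) = i)).card
          ≤ (S.card - 1) * 2 := by
        intro i
        obtain ⟨m, hmS, hmin⟩ := Finset.exists_min_image S (D i) hSne
        have hcard : ((S.erase m) ×ˢ (Finset.univ : Finset Bool)).card = (S.card - 1) * 2 := by
          rw [Finset.card_product, Finset.card_erase_of_mem hmS, Finset.card_univ,
            Fintype.card_bool]
        rw [← hcard]
        apply Finset.card_le_card_of_injOn
          (fun p => if D i p.1 < D i p.2 then (p.2, true) else (p.1, false))
        · intro p hp
          rw [Finset.mem_coe, Finset.mem_filter, hT, Finset.mem_filter, Finset.mem_product] at hp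
          obtain ⟨⟨⟨h1S, h2S⟩, hadj⟩, hci⟩ := hp
          rcases hstep i p.1 p.2 hadj hci with hs | hs
          · -- D p.1 = D p.2 + 1, so deeper is p.1
            have : ¬ D i p.1 < D i p.2 := by omega
            simp only [this, if_false, Finset.mem_coe, Finset.mem_product]
            refine ⟨Finset.mem_erase.mpr ⟨?_, h1S⟩, Finset.mem_univ _⟩
            intro heq
            rw [heq] at hs
            have := hmin p.2 h2S
            omega
          · have : D i p.1 < D i p.2 := by omega
            simp only [this, if_true, Finset.mem_coe, Finset.mem_product]
            refine ⟨Finset.mem_erase.mpr ⟨?_, h2S⟩, Finset.mem_univ _⟩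
            intro heq
            rw [heq] at hs
            have := hmin p.1 h1S
            omega
        · intro p hp q hq hpq
          obtain ⟨p1, p2⟩ := p
          obtain ⟨q1, q2⟩ := q
          rw [Finset.mem_coe, Finset.mem_filter, hT, Finset.mem_filter,
            Finset.mem_product] at hp hq
          obtain ⟨⟨⟨hp1S, hp2S⟩, hpadj⟩, hpci⟩ := hp
          obtain ⟨⟨⟨hq1S, hq2S⟩, hqadj⟩, hqci⟩ := hq
          simp only at hpadj hpci hp1S hp2S hqadj hqci hq1S hq2S
          by_cases h1 : D i p1 < D i p2 <;> by_cases h2 : D i q1 < D i q2 <;>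
            simp only [h1, h2, if_true, if_false, Prod.mk.injEq] at hpq
          · -- both ascending: common deeper endpoint p2 = q2
            obtain ⟨hx, -⟩ := hpq
            subst hx
            have hs1 : D i p1 + 1 = D i p2 := by
              rcases hstep i p1 p2 hpadj hpci with h | h <;> omega
            have hs2 : D i q1 + 1 = D i p2 := by
              rcases hstep i q1 p2 hqadj hqci with h | h <;> omega
            have := hpar i p2 p1 q1 hpadj hpci hqadj hqci hs1 hs2
            rw [this]
          · exact absurd hpq.2 (by simp)
          · exact absurd hpq.2 (by simp)
          · obtain ⟨hx, -⟩ := hpq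
            subst hx
            have hs1 : D i p2 + 1 = D i p1 := by
              rcases hstep i p1 p2 hpadj hpci with h | h <;> omega
            have hs2 : D i q2 + 1 = D i p1 := by
              rcases hstep i p1 q2 hqadj hqci with h | h <;> omega
            have hsym1 : cc s(p2, p1) = i := by rwa [Sym2.eq_swap]
            have hsym2 : cc s(q2, p1) = i := by rwa [Sym2.eq_swap]
            have := hpar i p1 p2 q2 hpadj.symm hsym1 hqadj.symm hsym2 hs1 hs2
            rw [this]
      have hup2 : T.card ≤ ℓ * ((S.card - 1) * 2) := by
        rw [hup]
        calc ∑ i ∈ (Finset.univ : Finset (Fin ℓ)),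
            (T.filter (fun p => cc s(p.1, p.2) = i)).card
            ≤ ∑ _i ∈ (Finset.univ : Finset (Fin ℓ)), (S.card - 1) * 2 :=
              Finset.sum_le_sum (fun i _ => hupi i)
          _ = ℓ * ((S.card - 1) * 2) := by
              rw [Finset.sum_const, smul_eq_mul, Finset.card_univ, Fintype.card_fin]
      have hcontr := hlow2.trans hup2
      obtain ⟨k, hk⟩ : ∃ k, S.card = k + 1 := ⟨S.card - 1, by omega⟩
      rw [hk] at hcontr
      simp only [Nat.add_sub_cancel] at hcontr
      nlinarith [hl]
    obtain ⟨v₀, hv₀S, hv₀⟩ := hdeg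
    obtain ⟨f', hf'⟩ := ih (S.erase v₀) (by
      have := Finset.card_erase_of_mem hv₀S
      omega)
    set N : Finset (Fin (2 * ℓ)) := (S.filter (fun w => G.Adj v₀ w)).image f' with hN
    have hNcard : N.card < 2 * ℓ := lt_of_le_of_lt (Finset.card_image_le) hv₀
    have hb : ∃ b : Fin (2 * ℓ), b ∉ N := by
      by_contra hcon
      push_neg at hcon
      have : (Finset.univ : Finset (Fin (2 * ℓ))) ⊆ N := fun b _ => hcon b
      have := Finset.card_le_card this
      rw [Finset.card_univ, Fintype.card_fin] at this
      omega
    obtain ⟨b, hbN⟩ := hb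
    refine ⟨Function.update f' v₀ b, ?_⟩
    intro u hu v hv hadj
    by_cases hu0 : u = v₀
    · subst hu0
      rw [Function.update_self, Function.update_of_ne hadj.ne']
      intro heq
      apply hbN
      rw [hN]
      exact Finset.mem_image.mpr ⟨v, Finset.mem_filter.mpr ⟨hv, hadj⟩, heq.symm⟩
    · by_cases hv0 : v = v₀
      · subst hv0
        rw [Function.update_self, Function.update_of_ne hu0]
        intro heq
        apply hbN
        rw [hN]
        exact Finset.mem_image.mpr ⟨u, Finset.mem_filter.mpr ⟨hu, hadj.symm⟩, heq⟩
      · rw [Function.update_of_ne hu0, Function.update_of_ne hv0]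
        exact hf' u (Finset.mem_erase.mpr ⟨hu0, hu⟩) v (Finset.mem_erase.mpr ⟨hv0, hv⟩) hadj



/-- The subgraph of `G` consisting of the edges of color `i`. -/
def colorClass {V α : Type*} (G : SimpleGraph V) (c : Sym2 V → α) (i : α) :
    SimpleGraph V where
  Adj u v := G.Adj u v ∧ c s(u, v) = i
  symm := by
    constructor
    intro u v ⟨h1, h2⟩
    exact ⟨h1.symm, by rwa [Sym2.eq_swap]⟩
  loopless := ⟨fun v h => G.loopless.irrefl v h.1⟩

lemma colorClass_isAcyclic {V α : Type*} {G : SimpleGraph V} {c : Sym2 V → α}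
    (hw : Woody G c) (i : α) : (colorClass G c i).IsAcyclic := by
  intro u p hp
  have hsub : ∀ e ∈ p.edges, e ∈ G.edgeSet := by
    intro e he
    have h2 := p.edges_subset_edgeSet he
    revert h2
    induction e using Sym2.ind with
    | _ x y =>
      intro h2
      exact (SimpleGraph.mem_edgeSet G).mpr ((SimpleGraph.mem_edgeSet _).mp h2).1
  apply hw (p.transfer G hsub) (hp.transfer hsub)
  refine ⟨i, ?_⟩
  intro e he
  rw [Walk.edges_transfer] at he
  have h2 := p.edges_subset_edgeSet he
  revert h2
  induction e using Sym2.ind with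
  | _ x y =>
    intro h2
    exact ((SimpleGraph.mem_edgeSet _).mp h2).2

lemma woody_set_nonempty {V : Type*} [Fintype V] [DecidableEq V] (G : SimpleGraph V) :
    {k | ∃ c : Sym2 V → Fin k, Woody G c}.Nonempty := by
  refine ⟨Fintype.card (Sym2 V), Fintype.equivFin (Sym2 V), ?_⟩
  intro u p hp hmono
  obtain ⟨a, ha⟩ := hmono
  have h3 : 3 ≤ p.length := hp.three_le_length
  have hlen : 2 ≤ p.edges.length := by rw [Walk.length_edges]; omega
  have hnd : p.edges.Nodup := hp.isCircuit.isTrail.edges_nodup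
  obtain ⟨e1, t1, ht1⟩ : ∃ e t, p.edges = e :: t :=
    List.exists_cons_of_ne_nil (by intro h; rw [h] at hlen; simp at hlen)
  obtain ⟨e2, t2, ht2⟩ : ∃ e t, t1 = e :: t :=
    List.exists_cons_of_ne_nil (by intro h; rw [ht1, h] at hlen; simp at hlen)
  have hne12 : e1 ≠ e2 := by
    rw [ht1, ht2, List.nodup_cons] at hnd
    exact fun h => hnd.1 (h ▸ List.mem_cons_self)
  have hm1 := ha e1 (by rw [ht1]; exact List.mem_cons_self)
  have hm2 := ha e2 (by rw [ht1, ht2]; exact List.mem_cons_of_mem _ List.mem_cons_self)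
  exact hne12 ((Fintype.equivFin (Sym2 V)).injective (hm1.trans hm2.symm))

end Stmt11Aux

/-- Every graph satisfies ζ(G) ≤ 4 · (arb(G))². -/

theorem stmt11 {V : Type*} [Fintype V] (G : SimpleGraph V) :
    strongArboricity G ≤ 4 * arboricity G ^ 2 := by
  classical
  open Stmt11Aux in
  by_cases hV : IsEmpty V
  · haveI : IsEmpty (Sym2 V) := by
      constructor
      intro e
      induction e using Sym2.ind with
      | _ x y => exact hV.false x
    have h0 : (0 : ℕ) ∈ {k | ∃ c : Sym2 V → Fin k, StronglyWoody G c} :=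
      ⟨fun e => isEmptyElim e, fun u => isEmptyElim u⟩
    exact le_trans (Nat.sInf_le h0) (Nat.zero_le _)
  haveI : Nonempty V := not_isEmpty_iff.mp hV
  obtain ⟨ℓ, hleq, c, hw⟩ : ∃ ℓ, ℓ = arboricity G ∧ ∃ c : Sym2 V → Fin ℓ, Woody G c :=
    ⟨arboricity G, rfl, Nat.sInf_mem (Stmt11Aux.woody_set_nonempty G)⟩
  rw [← hleq]
  have hl : 0 < ℓ := by
    by_contra h
    obtain ⟨v⟩ := ‹Nonempty V›
    have := (c s(v, v)).isLt
    omega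
  haveI : DecidableRel G.Adj := Classical.decRel _
  have hac : ∀ i, (colorClass G c i).IsAcyclic := colorClass_isAcyclic hw
  set D : Fin ℓ → V → ℕ := fun i v =>
    (colorClass G c i).dist (Quot.out ((colorClass G c i).connectedComponentMk v)) v with hD
  have hreach : ∀ (i : Fin ℓ) (v : V), (colorClass G c i).Reachable
      (Quot.out ((colorClass G c i).connectedComponentMk v)) v := by
    intro i v
    have h := Quot.out_eq ((colorClass G c i).connectedComponentMk v)
    exact (SimpleGraph.ConnectedComponent.eq).mp h
  have hroot : ∀ (i : Fin ℓ) (u v : V), (colorClass G c i).Adj u v →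
      Quot.out ((colorClass G c i).connectedComponentMk u)
        = Quot.out ((colorClass G c i).connectedComponentMk v) :=
    fun i u v h => congrArg Quot.out (ConnectedComponent.sound h.reachable)
  have hstepD : ∀ (i : Fin ℓ) (u v : V), (colorClass G c i).Adj u v →
      D i u = D i v + 1 ∨ D i v = D i u + 1 := by
    intro i u v h
    have hruv := hroot i u v h
    simp only [hD]
    rw [← hruv]
    exact adj_dist_succ (hac i) (hreach i u) h
  have hparD : ∀ (i : Fin ℓ) (x y z : V), (colorClass G c i).Adj y x →
      (colorClass G c i).Adj z x → D i y + 1 = D i x → D i z + 1 = D i x → y = z := by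
    intro i x y z hy hz h1 h2
    simp only [hD] at h1 h2
    rw [hroot i y x hy] at h1
    rw [hroot i z x hz] at h2
    exact parent_unique (hac i) (hreach i x) hy hz h1 h2
  obtain ⟨f, hf⟩ := greedy G ℓ hl c D
    (fun i u v h hc => hstepD i u v ⟨h, hc⟩)
    (fun i x y z hy hcy hz hcz h1 h2 => hparD i x y z ⟨hy, hcy⟩ ⟨hz, hcz⟩ h1 h2)
  have hpar2 : ∀ n : ℕ, n % 2 < 2 := fun n => Nat.mod_lt _ (by omega)
  set F : V → V → Fin ℓ × (Fin (2 * ℓ) × Fin 2) := fun u v =>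
    (c s(u, v),
      if D (c s(u, v)) u < D (c s(u, v)) v then (f v, ⟨D (c s(u, v)) v % 2, hpar2 _⟩)
      else if D (c s(u, v)) v < D (c s(u, v)) u then (f u, ⟨D (c s(u, v)) u % 2, hpar2 _⟩)
      else (max (f u) (f v), ⟨D (c s(u, v)) u % 2, hpar2 _⟩)) with hF
  have hFsymm : ∀ u v : V, F u v = F v u := by
    intro u v
    simp only [hF]
    rw [show (s(v, u) : Sym2 V) = s(u, v) from Sym2.eq_swap]
    rcases lt_trichotomy (D (c s(u, v)) u) (D (c s(u, v)) v) with h | h | h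
    · rw [if_pos h, if_neg (Nat.lt_asymm h), if_pos h]
    · rw [if_neg (by omega), if_neg (by omega), if_neg (by omega), if_neg (by omega), h,
        max_comm]
    · rw [if_neg (Nat.lt_asymm h), if_pos h, if_pos h]
  set c₂ : Sym2 V → Fin ℓ × (Fin (2 * ℓ) × Fin 2) := Sym2.lift ⟨fun u v => F u v, hFsymm⟩
    with hc₂
  have hc₂mk : ∀ x y : V, c₂ s(x, y) = F x y := by
    intro x y
    simp [hc₂]
  have hc₂fst : ∀ e : Sym2 V, (c₂ e).1 = c e := by
    intro e
    induction e using Sym2.ind with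
    | _ x y => rw [hc₂mk, hF]
  have h4 : ℓ * (2 * ℓ * 2) = 4 * ℓ ^ 2 := by ring
  let gE : (Fin ℓ × (Fin (2 * ℓ) × Fin 2)) ≃ Fin (4 * ℓ ^ 2) :=
    ((Equiv.prodCongr (Equiv.refl (Fin ℓ)) finProdFinEquiv).trans finProdFinEquiv).trans
      (finCongr h4)
  have hsw : StronglyWoody G (fun e => gE (c₂ e)) := by
    intro u v p hp hlen hadj hmono
    obtain ⟨a, ha⟩ := hmono
    have hc2 : ∀ e ∈ p.edges, c₂ e = gE.symm a := by
      intro e he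
      have h1 := ha e he
      simp only at h1
      rw [← h1, Equiv.symm_apply_apply]
    rcases hA : gE.symm a with ⟨i, fa, pa⟩
    rw [hA] at hc2
    have hci : ∀ e ∈ p.edges, c e = i := by
      intro e he
      rw [← hc₂fst e, hc2 e he]
    have hsub : ∀ e ∈ p.edges, e ∈ (colorClass G c i).edgeSet := by
      intro e he
      have h1 := p.edges_subset_edgeSet he
      have h2 := hci e he
      revert h1 h2
      induction e using Sym2.ind with
      | _ x y =>
        intro h1 h2
        exact (SimpleGraph.mem_edgeSet _).mpr ⟨(SimpleGraph.mem_edgeSet _).mp h1, h2⟩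
    set p' := p.transfer (colorClass G c i) hsub with hp'def
    have hp' : p'.IsPath := hp.transfer hsub
    have hM : ∀ ⦃x y : V⦄, s(x, y) ∈ p'.edges → D i y = D i x + 1 →
        (fun z => f z = fa) y ∧ D i y % 2 = (pa : Fin 2).val := by
      intro x y hxy hdxy
      rw [hp'def, Walk.edges_transfer] at hxy
      have hcxy : c s(x, y) = i := hci _ hxy
      have h2 := hc2 _ hxy
      rw [hc₂mk] at h2
      simp only [hF, hcxy] at h2
      rw [if_pos (by omega)] at h2
      simp only [Prod.mk.injEq] at h2
      refine ⟨h2.2.1, ?_⟩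
      have := congrArg Fin.val h2.2.2
      simpa using this
    have hlen' : 2 ≤ p'.length := by
      rw [hp'def, Walk.length_transfer]
      exact hlen
    obtain ⟨hAu, hAv⟩ := bothEnds
      (fun u' v' h => hstepD i u' v' h)
      (fun x y z hy hz h1 h2 => hparD i x y z hy hz h1 h2)
      p' hp' hM hlen'
    exact hf u v hadj (hAu.trans hAv.symm)
  have hmem4 : (4 * ℓ ^ 2) ∈ {k | ∃ c' : Sym2 V → Fin k, StronglyWoody G c'} :=
    ⟨_, hsw⟩
  exact Nat.sInf_le hmem4
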